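/- Let ξ be a mixture function, let c>0 satisfy c+ξ'(1)<ξ''(1), and let q̄∈(0,1) be the unique solution of c+ξ'(q̄)=q̄·ξ''(q̄). Let α:[0,1]→[0,∞) be nondecreasing with ∫₀¹α(r)dr<∞, set a(q)=∫₀^q α(r)dr, and let L∈ℝ satisfy L>∫₀¹α(r)dr. Then (c+ξ'(1))·L − ∫₀¹ ξ''(q)·a(q) dq + ∫₀¹ (L−a(q))^{-1} dq ≥ 2q̄·√(ξ''(q̄)) + 2∫_{q̄}^1 √(ξ''(q)) dq. -/

import Mathlib

open Set Filter MeasureTheory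

/-- A mean-field spin glass mixture function `ξ(z) = ∑_{p≥2} c_p² z^p`:
nonnegative, exponentially decaying coefficients (indexed so that `coeff p = c_p²`),
vanishing in degrees 0 and 1, and not identically zero. -/
structure MixtureFunction where
  coeff : ℕ → ℝ
  coeff_nonneg : ∀ p, 0 ≤ coeff p
  coeff_zero : coeff 0 = 0
  coeff_one : coeff 1 = 0
  coeff_decay : ∃ C r : ℝ, 0 < C ∧ 0 < r ∧ r < 1 ∧ ∀ p, coeff p ≤ C * r ^ p
  nontrivial : ∃ p, coeff p ≠ 0

/-- The mixture function `ξ(z) = ∑_p c_p² z^p`. -/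
noncomputable def MixtureFunction.xi (ξ : MixtureFunction) (z : ℝ) : ℝ :=
  ∑' p : ℕ, ξ.coeff p * z ^ p

/-- The first derivative `ξ'(z) = ∑_p p c_p² z^(p-1)`. -/
noncomputable def MixtureFunction.xi1 (ξ : MixtureFunction) (z : ℝ) : ℝ :=
  ∑' p : ℕ, (p : ℝ) * ξ.coeff p * z ^ (p - 1)

/-- The second derivative `ξ''(z) = ∑_p p(p-1) c_p² z^(p-2)`. -/
noncomputable def MixtureFunction.xi2 (ξ : MixtureFunction) (z : ℝ) : ℝ :=
  ∑' p : ℕ, (p : ℝ) * ((p : ℝ) - 1) * ξ.coeff p * z ^ (p - 2)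

/-- The third derivative `ξ'''(z) = ∑_p p(p-1)(p-2) c_p² z^(p-3)`. -/
noncomputable def MixtureFunction.xi3 (ξ : MixtureFunction) (z : ℝ) : ℝ :=
  ∑' p : ℕ, (p : ℝ) * ((p : ℝ) - 1) * ((p : ℝ) - 2) * ξ.coeff p * z ^ (p - 3)

namespace MixtureFunction
variable (ξ : MixtureFunction)

lemma term2_nonneg (p : ℕ) {z : ℝ} (h0 : 0 ≤ z) :
    0 ≤ (p : ℝ) * ((p : ℝ) - 1) * ξ.coeff p * z ^ (p - 2) := by
  match p with
  | 0 => norm_num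
  | 1 => norm_num
  | (n+2) =>
    have : (0:ℝ) ≤ ((n+2 : ℕ) : ℝ) * (((n+2:ℕ):ℝ) - 1) * ξ.coeff (n+2) := by
      have h := ξ.coeff_nonneg (n+2)
      have hn : (0:ℝ) ≤ (n:ℝ) := Nat.cast_nonneg n
      push_cast
      nlinarith [mul_nonneg hn h, mul_nonneg (mul_nonneg hn hn) h]
    exact mul_nonneg this (pow_nonneg h0 _)

lemma term1_nonneg (p : ℕ) {z : ℝ} (h0 : 0 ≤ z) :
    0 ≤ (p : ℝ) * ξ.coeff p * z ^ (p - 1) := by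
  have := ξ.coeff_nonneg p
  positivity

lemma xi1_nonneg {z : ℝ} (h0 : 0 ≤ z) : 0 ≤ ξ.xi1 z :=
  tsum_nonneg fun p => ξ.term1_nonneg p h0

lemma xi2_nonneg {z : ℝ} (h0 : 0 ≤ z) : 0 ≤ ξ.xi2 z :=
  tsum_nonneg fun p => ξ.term2_nonneg p h0

lemma xi1_zero : ξ.xi1 0 = 0 := by
  have : (fun p : ℕ => (p : ℝ) * ξ.coeff p * (0:ℝ) ^ (p - 1)) = fun _ => 0 := by
    funext p
    match p with
    | 0 => norm_num
    | 1 => simp [ξ.coeff_one]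
    | (n+2) => simp [pow_succ]
  rw [MixtureFunction.xi1, this, tsum_zero]

lemma summable2 {z : ℝ} (h0 : 0 ≤ z) (h1 : z ≤ 1) :
    Summable (fun p : ℕ => (p : ℝ) * ((p : ℝ) - 1) * ξ.coeff p * z ^ (p - 2)) := by
  obtain ⟨C, r, hC, hr0, hr1, hbd⟩ := ξ.coeff_decay
  have hsum : Summable (fun p : ℕ => C * ((p:ℝ) ^ 2 * r ^ p)) := by
    refine Summable.mul_left C ?_
    exact summable_pow_mul_geometric_of_norm_lt_one 2 (r := r)
      (by rw [Real.norm_eq_abs, abs_of_pos hr0]; exact hr1)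
  refine Summable.of_nonneg_of_le (fun p => ξ.term2_nonneg p h0) (fun p => ?_) hsum
  have hz : z ^ (p - 2) ≤ 1 := pow_le_one₀ h0 h1
  have hznn : (0:ℝ) ≤ z ^ (p - 2) := pow_nonneg h0 _
  have hcoeff : ξ.coeff p ≤ C * r ^ p := hbd p
  have hcnn := ξ.coeff_nonneg p
  have hpp : (p : ℝ) * ((p : ℝ) - 1) ≤ (p:ℝ)^2 := by nlinarith [Nat.cast_nonneg (α := ℝ) p]
  match p with
  | 0 => simp
  | 1 => norm_num; positivity
  | (n+2) =>
    have hppn : (0:ℝ) ≤ ((n+2:ℕ) : ℝ) * (((n+2:ℕ) : ℝ) - 1) := by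
      have hn : (0:ℝ) ≤ (n:ℝ) := Nat.cast_nonneg n
      push_cast; nlinarith
    calc ((n+2:ℕ) : ℝ) * (((n+2:ℕ):ℝ) - 1) * ξ.coeff (n+2) * z ^ (n+2-2)
        ≤ ((n+2:ℕ) : ℝ) * (((n+2:ℕ):ℝ) - 1) * ξ.coeff (n+2) * 1 :=
          mul_le_mul_of_nonneg_left hz (by exact mul_nonneg hppn hcnn)
      _ = ((n+2:ℕ) : ℝ) * (((n+2:ℕ):ℝ) - 1) * ξ.coeff (n+2) := mul_one _
      _ ≤ ((n+2:ℕ):ℝ)^2 * (C * r ^ (n+2)) := by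
          apply mul_le_mul hpp hcoeff hcnn (by positivity)
      _ = C * (((n+2:ℕ):ℝ) ^ 2 * r ^ (n+2)) := by ring

lemma xi2_mono : MonotoneOn ξ.xi2 (Icc 0 1) := by
  intro x hx y hy hxy
  refine Summable.tsum_le_tsum (fun p => ?_) (ξ.summable2 hx.1 hx.2) (ξ.summable2 hy.1 hy.2)
  match p with
  | 0 => norm_num
  | 1 => norm_num
  | (n+2) =>
    have hppn : (0:ℝ) ≤ ((n+2:ℕ) : ℝ) * (((n+2:ℕ) : ℝ) - 1) * ξ.coeff (n+2) := by
      have := ξ.coeff_nonneg (n+2)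
      have hn : (0:ℝ) ≤ (n:ℝ) := Nat.cast_nonneg n
      push_cast; nlinarith [mul_nonneg hn this, mul_nonneg (mul_nonneg hn hn) this]
    exact mul_le_mul_of_nonneg_left (pow_le_pow_left₀ hx.1 hxy _) hppn

lemma hasDerivAt_xi1 {x : ℝ} (hx : x ∈ Icc (0:ℝ) 1) : HasDerivAt ξ.xi1 (ξ.xi2 x) x := by
  obtain ⟨C, r, hC, hr0, hr1, hbd⟩ := ξ.coeff_decay
  set t : ℝ := (1 + r⁻¹) / 2 with ht_def
  have hrinv : 1 < r⁻¹ := (one_lt_inv₀ hr0).2 hr1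
  have ht1 : 1 < t := by rw [ht_def]; linarith
  have ht0 : (0:ℝ) < t := by linarith
  have hrt : r * t < 1 := by
    have : t < r⁻¹ := by rw [ht_def]; linarith
    calc r * t < r * r⁻¹ := by exact mul_lt_mul_of_pos_left this hr0
    _ = 1 := mul_inv_cancel₀ hr0.ne'
  have hu : Summable (fun p : ℕ => C * ((p:ℝ) ^ 2 * (r*t) ^ p)) := by
    refine Summable.mul_left C ?_
    exact summable_pow_mul_geometric_of_norm_lt_one 2 (r := r*t)
      (by rw [Real.norm_eq_abs, abs_of_pos (by positivity)]; exact hrt)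
  have hderiv : ∀ (p : ℕ) (y : ℝ), y ∈ Ioo (-t) t →
      HasDerivAt (fun z => (p : ℝ) * ξ.coeff p * z ^ (p - 1))
        ((p : ℝ) * ((p : ℝ) - 1) * ξ.coeff p * y ^ (p - 2)) y := by
    intro p y _
    match p with
    | 0 =>
      simpa using (hasDerivAt_const y ((0:ℝ) * ξ.coeff 0 * 1))
    | (n+1) =>
      have h := (hasDerivAt_pow (n+1-1) y).const_mul (((n+1:ℕ) : ℝ) * ξ.coeff (n+1))
      refine h.congr_deriv ?_
      have : ((n+1-1 : ℕ) : ℝ) = ((n+1:ℕ):ℝ) - 1 := by push_cast; ring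
      rw [this]
      have : n + 1 - 1 - 1 = n + 1 - 2 := by omega
      rw [this]
      ring
  have hbound : ∀ (p : ℕ) (y : ℝ), y ∈ Ioo (-t) t →
      ‖(p : ℝ) * ((p : ℝ) - 1) * ξ.coeff p * y ^ (p - 2)‖ ≤ C * ((p:ℝ) ^ 2 * (r*t) ^ p) := by
    intro p y hy
    have hyt : |y| ≤ t := le_of_lt (abs_lt.mpr ⟨hy.1, hy.2⟩)
    match p with
    | 0 => simpa using by positivity
    | (n+1) =>
      rw [Real.norm_eq_abs, abs_mul, abs_mul, abs_mul, abs_pow]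
      have h1 : |((n+1:ℕ):ℝ)| = ((n+1:ℕ):ℝ) := abs_of_nonneg (Nat.cast_nonneg _)
      have h2 : |(((n+1:ℕ):ℝ) - 1)| ≤ ((n+1:ℕ):ℝ) := by
        rw [abs_of_nonneg (by push_cast; linarith [Nat.cast_nonneg (α := ℝ) n])]
        push_cast; linarith [Nat.cast_nonneg (α := ℝ) n]
      have h3 : |ξ.coeff (n+1)| ≤ C * r ^ (n+1) := by
        rw [abs_of_nonneg (ξ.coeff_nonneg _)]; exact hbd (n+1)
      have h4 : |y| ^ (n+1-2) ≤ t ^ (n+1) := by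
        calc |y| ^ (n+1-2) ≤ t ^ (n+1-2) := pow_le_pow_left₀ (abs_nonneg y) hyt _
        _ ≤ t ^ (n+1) := pow_le_pow_right₀ (le_of_lt ht1) (by omega)
      calc |((n+1:ℕ):ℝ)| * |(((n+1:ℕ):ℝ) - 1)| * |ξ.coeff (n+1)| * |y| ^ (n+1-2)
          ≤ ((n+1:ℕ):ℝ) * ((n+1:ℕ):ℝ) * (C * r ^ (n+1)) * t ^ (n+1) := by
            refine mul_le_mul (mul_le_mul (mul_le_mul (le_of_eq h1) h2 (abs_nonneg _)
              (Nat.cast_nonneg _)) h3 (abs_nonneg _) (by positivity)) h4 (by positivity)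
              (by positivity)
        _ = C * (((n+1:ℕ):ℝ)^2 * (r*t)^(n+1)) := by rw [mul_pow]; ring
  have hx' : x ∈ Ioo (-t) t := ⟨by linarith [hx.1], by linarith [hx.2]⟩
  have h0 : (0:ℝ) ∈ Ioo (-t) t := ⟨by linarith, by linarith⟩
  have hsum0 : Summable (fun p : ℕ => (p : ℝ) * ξ.coeff p * (0:ℝ) ^ (p - 1)) := by
    have : (fun p : ℕ => (p : ℝ) * ξ.coeff p * (0:ℝ) ^ (p - 1)) = fun _ => 0 := by
      funext p
      match p with
      | 0 => norm_num
      | 1 => simp [ξ.coeff_one]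
      | (n+2) => simp [pow_succ]
    rw [this]; exact summable_zero
  exact hasDerivAt_tsum_of_isPreconnected hu isOpen_Ioo (isPreconnected_Ioo)
    hderiv hbound h0 hsum0 hx'

lemma integral_xi2 {y : ℝ} (hy : y ∈ Icc (0:ℝ) 1) :
    (∫ q in (0:ℝ)..y, ξ.xi2 q) = ξ.xi1 y := by
  have hint : IntervalIntegrable ξ.xi2 volume 0 y := by
    apply MonotoneOn.intervalIntegrable
    apply (ξ.xi2_mono).mono
    rw [uIcc_of_le hy.1]
    exact Icc_subset_Icc le_rfl hy.2
  have := intervalIntegral.integral_eq_sub_of_hasDerivAt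
    (f := ξ.xi1) (f' := ξ.xi2) (a := 0) (b := y) ?_ hint
  · rw [this, ξ.xi1_zero, sub_zero]
  · intro q hq
    rw [uIcc_of_le hy.1] at hq
    exact ξ.hasDerivAt_xi1 ⟨hq.1, le_trans hq.2 hy.2⟩

end MixtureFunction

lemma inv_bound (y B : ℝ) (hB : 0 < B) : 2*y - y^2*B ≤ B⁻¹ := by
  rw [← one_div, le_div_iff₀ hB]
  nlinarith [sq_nonneg (y*B - 1)]

/-- Lower bound on (twice) Chen's zero-temperature Crisanti–Sommers functional:
for any nondecreasing, integrable `α : [0,1] → [0,∞)` with `a(q) = ∫₀^q α` and any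
`L > ∫₀¹ α`, one has
`(c + ξ'(1)) L - ∫₀¹ ξ''(q) a(q) dq + ∫₀¹ (L - a(q))⁻¹ dq ≥ 2 q̄ √(ξ''(q̄)) + 2 ∫_{q̄}¹ √(ξ''(q)) dq`. -/
theorem crisanti_sommers_lower_bound (ξ : MixtureFunction) (c : ℝ) (hc : 0 < c)
    (hlt : c + ξ.xi1 1 < ξ.xi2 1)
    (qbar : ℝ) (hqbar : qbar ∈ Ioo (0 : ℝ) 1)
    (hfix : c + ξ.xi1 qbar = qbar * ξ.xi2 qbar)
    (α : ℝ → ℝ) (hα0 : ∀ r ∈ Icc (0 : ℝ) 1, 0 ≤ α r)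
    (hαmono : MonotoneOn α (Icc 0 1))
    (hαint : IntervalIntegrable α volume 0 1)
    (L : ℝ) (hL : (∫ r in (0 : ℝ)..1, α r) < L) :
    2 * qbar * Real.sqrt (ξ.xi2 qbar) + 2 * (∫ q in qbar..1, Real.sqrt (ξ.xi2 q)) ≤
      (c + ξ.xi1 1) * L - (∫ q in (0 : ℝ)..1, ξ.xi2 q * (∫ r in (0 : ℝ)..q, α r))
        + (∫ q in (0 : ℝ)..1, (L - ∫ r in (0 : ℝ)..q, α r)⁻¹) := by
  obtain ⟨hq0, hq1⟩ := hqbar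
  have hq0' : (0:ℝ) ≤ qbar := le_of_lt hq0
  have hq1' : qbar ≤ 1 := le_of_lt hq1
  set A : ℝ → ℝ := fun q => ∫ r in (0:ℝ)..q, α r with hA
  have e1 : (∫ q in (0:ℝ)..1, ξ.xi2 q * (∫ r in (0:ℝ)..q, α r))
      = ∫ q in (0:ℝ)..1, ξ.xi2 q * A q := rfl
  have e2 : (∫ q in (0:ℝ)..1, (L - ∫ r in (0:ℝ)..q, α r)⁻¹)
      = ∫ q in (0:ℝ)..1, (L - A q)⁻¹ := rfl
  rw [e1, e2]
  -- basic facts about A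
  have hintα : ∀ u v : ℝ, u ∈ Icc (0:ℝ) 1 → v ∈ Icc (0:ℝ) 1 →
      IntervalIntegrable α volume u v := by
    intro u v hu hv
    refine hαint.mono_set (uIcc_subset_uIcc ?_ ?_) <;>
      rw [uIcc_of_le (zero_le_one)] <;> assumption
  have hAmono : MonotoneOn A (Icc 0 1) := by
    intro u hu v hv huv
    have h := intervalIntegral.integral_add_adjacent_intervals
      (hintα 0 u ⟨le_rfl, zero_le_one⟩ hu) (hintα u v hu hv)
    have hnn : 0 ≤ ∫ r in u..v, α r :=
      intervalIntegral.integral_nonneg huv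
        (fun r hr => hα0 r ⟨le_trans hu.1 hr.1, le_trans hr.2 hv.2⟩)
    simp only [hA]
    linarith [h]
  have hAnonneg : ∀ q ∈ Icc (0:ℝ) 1, 0 ≤ A q := by
    intro q hq
    exact intervalIntegral.integral_nonneg hq.1 (fun r hr => hα0 r ⟨hr.1, le_trans hr.2 hq.2⟩)
  have hbpos : ∀ q ∈ Icc (0:ℝ) 1, 0 < L - A q := by
    intro q hq
    have h1 : A q ≤ A 1 := hAmono hq ⟨zero_le_one, le_rfl⟩ hq.2
    have h2 : A 1 < L := hL
    linarith
  have hbleL : ∀ q ∈ Icc (0:ℝ) 1, L - A q ≤ L := by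
    intro q hq; linarith [hAnonneg q hq]
  -- monotonicity of integrands on [0,1]
  have hmono2 := ξ.xi2_mono
  have hmono2A : MonotoneOn (fun q => ξ.xi2 q * A q) (Icc 0 1) := by
    intro u hu v hv huv
    exact mul_le_mul (hmono2 hu hv huv) (hAmono hu hv huv) (hAnonneg u hu) (ξ.xi2_nonneg hv.1)
  have hmonobinv : MonotoneOn (fun q => (L - A q)⁻¹) (Icc 0 1) := by
    intro u hu v hv huv
    have := hAmono hu hv huv
    exact inv_anti₀ (hbpos v hv) (by linarith)
  have hmonosqrt : MonotoneOn (fun q => Real.sqrt (ξ.xi2 q)) (Icc 0 1) := by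
    intro u hu v hv huv
    exact Real.sqrt_le_sqrt (hmono2 hu hv huv)
  -- integrability on subintervals of [0,1]
  have hsub : ∀ u v : ℝ, 0 ≤ u → u ≤ v → v ≤ 1 → uIcc u v ⊆ Icc (0:ℝ) 1 := by
    intro u v h0 huv h1
    rw [uIcc_of_le huv]
    exact Icc_subset_Icc h0 h1
  have int_xi2 : ∀ u v : ℝ, 0 ≤ u → u ≤ v → v ≤ 1 → IntervalIntegrable ξ.xi2 volume u v :=
    fun u v h0 huv h1 => (hmono2.mono (hsub u v h0 huv h1)).intervalIntegrable
  have int_xi2A : ∀ u v : ℝ, 0 ≤ u → u ≤ v → v ≤ 1 →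
      IntervalIntegrable (fun q => ξ.xi2 q * A q) volume u v :=
    fun u v h0 huv h1 => (hmono2A.mono (hsub u v h0 huv h1)).intervalIntegrable
  have int_binv : ∀ u v : ℝ, 0 ≤ u → u ≤ v → v ≤ 1 →
      IntervalIntegrable (fun q => (L - A q)⁻¹) volume u v :=
    fun u v h0 huv h1 => (hmonobinv.mono (hsub u v h0 huv h1)).intervalIntegrable
  have int_sqrt : ∀ u v : ℝ, 0 ≤ u → u ≤ v → v ≤ 1 →
      IntervalIntegrable (fun q => Real.sqrt (ξ.xi2 q)) volume u v :=
    fun u v h0 huv h1 => (hmonosqrt.mono (hsub u v h0 huv h1)).intervalIntegrable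
  have hfuneq : (fun q => ξ.xi2 q * (L - A q))
      = (fun q => ξ.xi2 q * L - ξ.xi2 q * A q) := funext fun q => by ring
  have int_xi2b : ∀ u v : ℝ, 0 ≤ u → u ≤ v → v ≤ 1 →
      IntervalIntegrable (fun q => ξ.xi2 q * (L - A q)) volume u v := by
    intro u v h0 huv h1
    rw [hfuneq]
    exact ((int_xi2 u v h0 huv h1).mul_const L).sub (int_xi2A u v h0 huv h1)
  have int_sum : ∀ u v : ℝ, 0 ≤ u → u ≤ v → v ≤ 1 →
      IntervalIntegrable (fun q => ξ.xi2 q * (L - A q) + (L - A q)⁻¹) volume u v :=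
    fun u v h0 huv h1 => (int_xi2b u v h0 huv h1).add (int_binv u v h0 huv h1)
  -- FTC facts
  have hFTCq : (∫ q in (0:ℝ)..qbar, ξ.xi2 q) = ξ.xi1 qbar := ξ.integral_xi2 ⟨hq0', hq1'⟩
  have hFTC1 : (∫ q in (0:ℝ)..1, ξ.xi2 q) = ξ.xi1 1 := ξ.integral_xi2 ⟨zero_le_one, le_rfl⟩
  -- rewrite step
  have hR : (∫ q in (0:ℝ)..1, ξ.xi2 q * (L - A q))
      = ξ.xi1 1 * L - ∫ q in (0:ℝ)..1, ξ.xi2 q * A q := by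
    rw [hfuneq, intervalIntegral.integral_sub ((int_xi2 0 1 le_rfl zero_le_one le_rfl).mul_const L)
      (int_xi2A 0 1 le_rfl zero_le_one le_rfl), intervalIntegral.integral_mul_const, hFTC1]
  -- sqrt value at qbar
  set x := Real.sqrt (ξ.xi2 qbar) with hxdef
  have hx2 : x^2 = ξ.xi2 qbar := Real.sq_sqrt (ξ.xi2_nonneg hq0')
  -- pointwise bound on [0, qbar]
  have hptA : ∀ q ∈ Icc (0:ℝ) qbar,
      (2*x - x^2*L) + L * ξ.xi2 q ≤ ξ.xi2 q * (L - A q) + (L - A q)⁻¹ := by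
    intro q hq
    have hq01 : q ∈ Icc (0:ℝ) 1 := ⟨hq.1, le_trans hq.2 hq1'⟩
    have hB := hbpos q hq01
    have hBL := hbleL q hq01
    have hξle : ξ.xi2 q ≤ x^2 := by rw [hx2]; exact hmono2 hq01 ⟨hq0', hq1'⟩ hq.2
    have hkey := inv_bound x (L - A q) hB
    nlinarith [mul_nonneg (sub_nonneg.2 hξle) (sub_nonneg.2 hBL)]
  -- pointwise bound on [qbar, 1]
  have hptB : ∀ q ∈ Icc qbar (1:ℝ),
      2 * Real.sqrt (ξ.xi2 q) ≤ ξ.xi2 q * (L - A q) + (L - A q)⁻¹ := by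
    intro q hq
    have hq01 : q ∈ Icc (0:ℝ) 1 := ⟨le_trans hq0' hq.1, hq.2⟩
    have hB := hbpos q hq01
    have hkey := inv_bound (Real.sqrt (ξ.xi2 q)) (L - A q) hB
    have hs : (Real.sqrt (ξ.xi2 q))^2 = ξ.xi2 q := Real.sq_sqrt (ξ.xi2_nonneg hq01.1)
    nlinarith
  -- part A
  have hAineq : 2*qbar*x ≤ c*L + (∫ q in (0:ℝ)..qbar, ξ.xi2 q * (L - A q))
      + ∫ q in (0:ℝ)..qbar, (L - A q)⁻¹ := by
    have hmonoI := intervalIntegral.integral_mono_on hq0'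
      ((intervalIntegrable_const (c := 2*x - x^2*L)).add
        ((int_xi2 0 qbar le_rfl hq0' hq1').const_mul L))
      (int_sum 0 qbar le_rfl hq0' hq1') hptA
    have hlow : (∫ q in (0:ℝ)..qbar, ((2*x - x^2*L) + L * ξ.xi2 q))
        = (2*x - x^2*L)*qbar + L * ξ.xi1 qbar := by
      rw [intervalIntegral.integral_add (intervalIntegrable_const (c := 2*x - x^2*L))
        ((int_xi2 0 qbar le_rfl hq0' hq1').const_mul L),
        intervalIntegral.integral_const, intervalIntegral.integral_const_mul, hFTCq]
      simp [smul_eq_mul]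
      ring
    have hsplitadd : (∫ q in (0:ℝ)..qbar, (ξ.xi2 q * (L - A q) + (L - A q)⁻¹))
        = (∫ q in (0:ℝ)..qbar, ξ.xi2 q * (L - A q)) + ∫ q in (0:ℝ)..qbar, (L - A q)⁻¹ :=
      intervalIntegral.integral_add (int_xi2b 0 qbar le_rfl hq0' hq1')
        (int_binv 0 qbar le_rfl hq0' hq1')
    have hqx : qbar * x^2 = c + ξ.xi1 qbar := by rw [hx2]; linarith
    have hprod : x^2*L*qbar = c*L + L*ξ.xi1 qbar := by linear_combination L * hqx
    rw [hlow, hsplitadd] at hmonoI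
    linarith
  -- part B
  have hBineq : 2*(∫ q in qbar..1, Real.sqrt (ξ.xi2 q))
      ≤ (∫ q in qbar..1, ξ.xi2 q * (L - A q)) + ∫ q in qbar..1, (L - A q)⁻¹ := by
    have hmonoI := intervalIntegral.integral_mono_on hq1'
      ((int_sqrt qbar 1 hq0' hq1' le_rfl).const_mul 2)
      (int_sum qbar 1 hq0' hq1' le_rfl) hptB
    have hsplitadd : (∫ q in qbar..1, (ξ.xi2 q * (L - A q) + (L - A q)⁻¹))
        = (∫ q in qbar..1, ξ.xi2 q * (L - A q)) + ∫ q in qbar..1, (L - A q)⁻¹ :=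
      intervalIntegral.integral_add (int_xi2b qbar 1 hq0' hq1' le_rfl)
        (int_binv qbar 1 hq0' hq1' le_rfl)
    rw [intervalIntegral.integral_const_mul, hsplitadd] at hmonoI
    linarith
  -- splitting at qbar
  have hsplit1 : (∫ q in (0:ℝ)..qbar, ξ.xi2 q * (L - A q))
      + (∫ q in qbar..1, ξ.xi2 q * (L - A q)) = ∫ q in (0:ℝ)..1, ξ.xi2 q * (L - A q) :=
    intervalIntegral.integral_add_adjacent_intervals (int_xi2b 0 qbar le_rfl hq0' hq1')
      (int_xi2b qbar 1 hq0' hq1' le_rfl)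
  have hsplit2 : (∫ q in (0:ℝ)..qbar, (L - A q)⁻¹)
      + (∫ q in qbar..1, (L - A q)⁻¹) = ∫ q in (0:ℝ)..1, (L - A q)⁻¹ :=
    intervalIntegral.integral_add_adjacent_intervals (int_binv 0 qbar le_rfl hq0' hq1')
      (int_binv qbar 1 hq0' hq1' le_rfl)
  linarith
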